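/- Let H be a symmetric positive definite matrix, A a matrix, S_bold a matrix, and suppose the nullspace of [A, S_bold'] equals {(0', v')' : v ∈ Null(S_bold')}. Let J be the orthogonal projection onto Null(S_bold') and α > 0. Then every eigenvalue of the block matrix B = [[H, A, S_bold'], [−A', 0, 0], [−J, 0, (1/α)J]] has positive real part. -/

import Mathlib

open Matrix

open Complex in

lemma aux_re_mulVec {n n' : Type*} [Fintype n'] (M : Matrix n n' ℝ) (z : n' → ℂ) (i : n) :
    ((M.map Complex.ofReal *ᵥ z) i).re = (M *ᵥ fun j => (z j).re) i := by
  simp [mulVec, dotProduct, Complex.re_sum]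

lemma aux_im_mulVec {n n' : Type*} [Fintype n'] (M : Matrix n n' ℝ) (z : n' → ℂ) (i : n) :
    ((M.map Complex.ofReal *ᵥ z) i).im = (M *ᵥ fun j => (z j).im) i := by
  simp [mulVec, dotProduct, Complex.im_sum]

lemma aux_dot_conj {n n' : Type*} [Fintype n] [Fintype n'] (M : Matrix n n' ℝ)
    (a : n → ℂ) (b : n' → ℂ) :
    star a ⬝ᵥ (M.map Complex.ofReal *ᵥ b)
      = (starRingEnd ℂ) (star b ⬝ᵥ (Mᵀ.map Complex.ofReal *ᵥ a)) := by
  simp only [dotProduct, mulVec, Matrix.map_apply, Matrix.transpose_apply,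
    Finset.mul_sum, map_sum, _root_.map_mul, Complex.conj_ofReal,
    Pi.star_apply, Complex.star_def, Complex.conj_conj]
  rw [Finset.sum_comm]
  exact Finset.sum_congr rfl fun i _ => Finset.sum_congr rfl fun j _ => by ring

lemma aux_re_quad {n : Type*} [Fintype n] (M : Matrix n n ℝ) (a : n → ℂ) :
    (star a ⬝ᵥ (M.map Complex.ofReal *ᵥ a)).re
      = (fun i => (a i).re) ⬝ᵥ (M *ᵥ fun i => (a i).re)
        + (fun i => (a i).im) ⬝ᵥ (M *ᵥ fun i => (a i).im) := by
  simp only [dotProduct, mulVec, Matrix.map_apply, Finset.mul_sum, Complex.re_sum,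
    Pi.star_apply, ← Finset.sum_add_distrib]
  refine Finset.sum_congr rfl fun i _ => Finset.sum_congr rfl fun j _ => ?_
  simp only [Complex.mul_re, Complex.mul_im, Complex.star_def, Complex.conj_re,
    Complex.conj_im, Complex.ofReal_re, Complex.ofReal_im]
  ring

lemma aux_self_dot {n : Type*} [Fintype n] (y : n → ℂ) :
    star y ⬝ᵥ y = ((∑ i, Complex.normSq (y i) : ℝ) : ℂ) := by
  simp only [dotProduct, Pi.star_apply, Complex.star_def, Complex.ofReal_sum]
  exact Finset.sum_congr rfl fun i _ => by
    rw [mul_comm, Complex.mul_conj]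


/-- each eigenvalue of the block matrix
`B = [[H, A, S_boldᵀ], [−Aᵀ, 0, 0], [−S_bold, 0, (1/α) J]]` (with `H ≻ 0`,
`J` the orthogonal projector onto `Null(S_boldᵀ)`, `α > 0`, and the nullspace
condition `A u + S_boldᵀ v = 0 ⇒ u = 0 ∧ v ∈ Null(S_boldᵀ)`) has positive
real part.  (The bottom-left block is the one actually used in the paper's
eigenvalue computation.) -/
theorem stmt10 (m p q : ℕ)
    (H : Matrix (Fin m) (Fin m) ℝ) (hH : H.PosDef)
    (A : Matrix (Fin m) (Fin p) ℝ) (Sb : Matrix (Fin q) (Fin m) ℝ)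
    (J : Matrix (Fin q) (Fin q) ℝ)
    (hJsym : Jᵀ = J) (hJidem : J * J = J)
    (hJmem : ∀ w : Fin q → ℝ, Sbᵀ *ᵥ (J *ᵥ w) = 0)
    (hJfix : ∀ w : Fin q → ℝ, Sbᵀ *ᵥ w = 0 → J *ᵥ w = w)
    (hnull : ∀ (u : Fin p → ℝ) (v : Fin q → ℝ),
      A *ᵥ u + Sbᵀ *ᵥ v = 0 → u = 0 ∧ Sbᵀ *ᵥ v = 0)
    (α : ℝ) (hα : 0 < α)
    (B : Matrix (Fin m ⊕ (Fin p ⊕ Fin q)) (Fin m ⊕ (Fin p ⊕ Fin q)) ℝ)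
    (hB : B = Matrix.fromBlocks H (Matrix.fromCols A Sbᵀ)
      (Matrix.fromRows (-Aᵀ) (-Sb)) (Matrix.fromBlocks 0 0 0 (α⁻¹ • J))) :
    ∀ (β : ℂ) (v : Fin m ⊕ (Fin p ⊕ Fin q) → ℂ), v ≠ 0 →
      (B.map Complex.ofReal) *ᵥ v = β • v → 0 < β.re := by
  intro β v hv heq
  set X : Fin m → ℂ := fun i => v (Sum.inl i) with hX
  set U : Fin p → ℂ := fun i => v (Sum.inr (Sum.inl i)) with hU
  set W : Fin q → ℂ := fun i => v (Sum.inr (Sum.inr i)) with hW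
  -- the three block equations
  have e1 : H.map Complex.ofReal *ᵥ X + A.map Complex.ofReal *ᵥ U
      + (Sbᵀ).map Complex.ofReal *ᵥ W = β • X := by
    funext i
    have h := congrFun heq (Sum.inl i)
    simp only [hB, mulVec, dotProduct, Fintype.sum_sum_type, Matrix.map_apply,
      Matrix.fromBlocks_apply₁₁, Matrix.fromBlocks_apply₁₂,
      Matrix.fromCols_apply_inl, Matrix.fromCols_apply_inr,
      Pi.smul_apply, smul_eq_mul, Pi.add_apply] at h ⊢
    rw [← h]; ring_nf
    rfl
  have e2 : -((Aᵀ).map Complex.ofReal *ᵥ X) = β • U := by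
    funext i
    have h := congrFun heq (Sum.inr (Sum.inl i))
    simp only [hB, mulVec, dotProduct, Fintype.sum_sum_type, Matrix.map_apply,
      Matrix.fromBlocks_apply₂₁, Matrix.fromBlocks_apply₂₂,
      Matrix.fromRows_apply_inl, Matrix.fromRows_apply_inr,
      Matrix.fromCols_apply_inl, Matrix.fromCols_apply_inr,
      Matrix.zero_apply, Complex.ofReal_zero, zero_mul, Finset.sum_const_zero,
      add_zero, Matrix.neg_apply, Complex.ofReal_neg, neg_mul,
      Pi.smul_apply, smul_eq_mul, Pi.add_apply, Pi.neg_apply] at h ⊢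
    rw [← h]
    simp
    rfl
  have e3 : -(Sb.map Complex.ofReal *ᵥ X) + (α⁻¹ : ℂ) • (J.map Complex.ofReal *ᵥ W)
      = β • W := by
    funext i
    have h := congrFun heq (Sum.inr (Sum.inr i))
    simp only [hB, mulVec, dotProduct, Fintype.sum_sum_type, Matrix.map_apply,
      Matrix.fromBlocks_apply₂₁, Matrix.fromBlocks_apply₂₂,
      Matrix.fromRows_apply_inl, Matrix.fromRows_apply_inr,
      Matrix.zero_apply, Complex.ofReal_zero, zero_mul, Finset.sum_const_zero,
      zero_add, Matrix.neg_apply, Complex.ofReal_neg, neg_mul,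
      Matrix.smul_apply, smul_eq_mul, Complex.ofReal_mul,
      Pi.smul_apply, Pi.add_apply, Pi.neg_apply] at h ⊢
    rw [← h]
    simp [Finset.mul_sum]
    ring_nf
    rfl
  -- dot the equations with conjugate vectors
  have hdot : star X ⬝ᵥ (H.map Complex.ofReal *ᵥ X + A.map Complex.ofReal *ᵥ U
        + (Sbᵀ).map Complex.ofReal *ᵥ W)
      + star U ⬝ᵥ (-((Aᵀ).map Complex.ofReal *ᵥ X))
      + star W ⬝ᵥ (-(Sb.map Complex.ofReal *ᵥ X)
          + (α⁻¹ : ℂ) • (J.map Complex.ofReal *ᵥ W))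
      = β * (star X ⬝ᵥ X + star U ⬝ᵥ U + star W ⬝ᵥ W) := by
    rw [e1, e2, e3]
    simp [dotProduct_smul, smul_eq_mul]
    ring
  -- quantities
  set Xr : Fin m → ℝ := fun i => (X i).re with hXr
  set Xi : Fin m → ℝ := fun i => (X i).im with hXi
  set Wr : Fin q → ℝ := fun i => (W i).re with hWr
  set Wi : Fin q → ℝ := fun i => (W i).im with hWi
  set QH : ℝ := Xr ⬝ᵥ (H *ᵥ Xr) + Xi ⬝ᵥ (H *ᵥ Xi) with hQH
  set QJ : ℝ := Wr ⬝ᵥ (J *ᵥ Wr) + Wi ⬝ᵥ (J *ᵥ Wi) with hQJ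
  set N : ℝ := (∑ i, Complex.normSq (X i)) + (∑ i, Complex.normSq (U i))
      + (∑ i, Complex.normSq (W i)) with hN
  -- cross-term cancellation
  have crossA : star U ⬝ᵥ ((Aᵀ).map Complex.ofReal *ᵥ X)
      = (starRingEnd ℂ) (star X ⬝ᵥ (A.map Complex.ofReal *ᵥ U)) := by
    rw [aux_dot_conj, Matrix.transpose_transpose]
  have crossS : star W ⬝ᵥ (Sb.map Complex.ofReal *ᵥ X)
      = (starRingEnd ℂ) (star X ⬝ᵥ ((Sbᵀ).map Complex.ofReal *ᵥ W)) := by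
    rw [aux_dot_conj]
  -- the real-part equation
  have hre : QH + α⁻¹ * QJ = β.re * N := by
    have h := congrArg Complex.re hdot
    simp only [dotProduct_add, dotProduct_neg, dotProduct_smul] at h
    rw [crossA, crossS, aux_self_dot X, aux_self_dot U, aux_self_dot W] at h
    simp only [Complex.add_re, Complex.neg_re, Complex.conj_re, smul_eq_mul,
      Complex.mul_re, Complex.ofReal_re, Complex.ofReal_im, Complex.add_im,
      Complex.ofReal_add, mul_zero, sub_zero, zero_mul,
      ← Complex.ofReal_inv] at h
    rw [aux_re_quad H X, aux_re_quad J W] at h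
    simp only [Complex.ofReal_re, Complex.ofReal_im, zero_mul, sub_zero,
      add_zero, mul_zero] at h
    rw [hQH, hQJ, hN]
    rw [← h]
    ring
  -- nonnegativity of QH
  have hQHnn : 0 ≤ QH := by
    have h1 := hH.posSemidef.dotProduct_mulVec_nonneg Xr
    have h2 := hH.posSemidef.dotProduct_mulVec_nonneg Xi
    simp only [star_trivial] at h1 h2
    rw [hQH]; linarith
  have hJquad : ∀ y : Fin q → ℝ, y ⬝ᵥ (J *ᵥ y) = (J *ᵥ y) ⬝ᵥ (J *ᵥ y) := by
    intro y
    conv_lhs => rw [← hJidem]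
    rw [← Matrix.mulVec_mulVec, Matrix.dotProduct_mulVec]
    congr 1
    rw [← hJsym, Matrix.vecMul_transpose, hJsym]
  have hself : ∀ (y : Fin q → ℝ), 0 ≤ y ⬝ᵥ y := fun y =>
    Finset.sum_nonneg fun i _ => mul_self_nonneg _
  have hQJnn : 0 ≤ QJ := by
    rw [hQJ, hJquad Wr, hJquad Wi]
    exact add_nonneg (hself _) (hself _)
  -- N > 0
  have hNsum : N = ∑ k : Fin m ⊕ (Fin p ⊕ Fin q), Complex.normSq (v k) := by
    rw [hN, Fintype.sum_sum_type, Fintype.sum_sum_type]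
    ring
  have hNnn : 0 ≤ N := by
    rw [hNsum]
    exact Finset.sum_nonneg fun k _ => Complex.normSq_nonneg _
  have hNpos : 0 < N := by
    rcases hNnn.lt_or_eq with h | h
    · exact h
    · exfalso
      apply hv
      funext k
      have := (Finset.sum_eq_zero_iff_of_nonneg
        (fun k _ => Complex.normSq_nonneg (v k))).mp (hNsum ▸ h.symm) k (Finset.mem_univ k)
      exact Complex.normSq_eq_zero.mp this
  -- conclude
  by_contra hcon
  push_neg at hcon
  have hposprod : 0 ≤ β.re * N := by
    rw [← hre]
    have : 0 ≤ α⁻¹ * QJ := mul_nonneg (le_of_lt (inv_pos.mpr hα)) hQJnn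
    linarith
  have hbge : (0:ℝ) ≤ β.re := by
    by_contra hneg
    push_neg at hneg
    nlinarith
  have hbre : β.re = 0 := le_antisymm hcon hbge
  have hsum0 : QH + α⁻¹ * QJ = 0 := by rw [hre, hbre, zero_mul]
  have hQH0 : QH = 0 := by
    have : 0 ≤ α⁻¹ * QJ := mul_nonneg (le_of_lt (inv_pos.mpr hα)) hQJnn
    linarith
  have hQJ0 : QJ = 0 := by
    have h1 : α⁻¹ * QJ = 0 := by linarith
    rcases mul_eq_zero.mp h1 with h | h
    · exact absurd h (ne_of_gt (inv_pos.mpr hα))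
    · exact h
  -- X = 0
  have hXr0 : Xr = 0 := by
    by_contra h
    have hp := hH.dotProduct_mulVec_pos h
    simp only [star_trivial] at hp
    have h2 := hH.posSemidef.dotProduct_mulVec_nonneg Xi
    simp only [star_trivial] at h2
    rw [hQH] at hQH0; linarith
  have hXi0 : Xi = 0 := by
    by_contra h
    have hp := hH.dotProduct_mulVec_pos h
    simp only [star_trivial] at hp
    have h2 := hH.posSemidef.dotProduct_mulVec_nonneg Xr
    simp only [star_trivial] at h2
    rw [hQH] at hQH0; linarith
  have hX0 : X = 0 := by
    funext i
    have hr := congrFun hXr0 i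
    have hi := congrFun hXi0 i
    simp only [hXr, hXi, Pi.zero_apply] at hr hi
    exact Complex.ext hr hi
  -- J *ᵥ Wr = 0 and J *ᵥ Wi = 0
  have hJWr : J *ᵥ Wr = 0 := by
    have h2 : 0 ≤ Wr ⬝ᵥ (J *ᵥ Wr) := by rw [hJquad]; exact hself _
    have h3 : 0 ≤ Wi ⬝ᵥ (J *ᵥ Wi) := by rw [hJquad]; exact hself _
    have h4 : Wr ⬝ᵥ (J *ᵥ Wr) = 0 := by rw [hQJ] at hQJ0; linarith
    rw [hJquad] at h4
    exact dotProduct_self_eq_zero.mp h4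
  have hJWi : J *ᵥ Wi = 0 := by
    have h2 : 0 ≤ Wr ⬝ᵥ (J *ᵥ Wr) := by rw [hJquad]; exact hself _
    have h3 : 0 ≤ Wi ⬝ᵥ (J *ᵥ Wi) := by rw [hJquad]; exact hself _
    have h4 : Wi ⬝ᵥ (J *ᵥ Wi) = 0 := by rw [hQJ] at hQJ0; linarith
    rw [hJquad] at h4
    exact dotProduct_self_eq_zero.mp h4
  have hJW0 : J.map Complex.ofReal *ᵥ W = 0 := by
    funext i
    apply Complex.ext
    · rw [aux_re_mulVec]
      simpa using congrFun hJWr i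
    · rw [aux_im_mulVec]
      simpa using congrFun hJWi i
  -- split on β = 0
  rcases eq_or_ne β 0 with hb | hb
  · -- β = 0 : use nullspace condition
    rw [hX0, Matrix.mulVec_zero, zero_add, hb, zero_smul] at e1
    have hre1 : A *ᵥ (fun i => (U i).re) + Sbᵀ *ᵥ Wr = 0 := by
      funext i
      have := congrFun e1 i
      have hr := congrArg Complex.re this
      rw [Pi.add_apply, Complex.add_re, aux_re_mulVec, aux_re_mulVec] at hr
      simpa using hr
    have him1 : A *ᵥ (fun i => (U i).im) + Sbᵀ *ᵥ Wi = 0 := by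
      funext i
      have := congrFun e1 i
      have hi := congrArg Complex.im this
      rw [Pi.add_apply, Complex.add_im, aux_im_mulVec, aux_im_mulVec] at hi
      simpa using hi
    obtain ⟨hUr0, hSWr⟩ := hnull _ _ hre1
    obtain ⟨hUi0, hSWi⟩ := hnull _ _ him1
    have hWr0 : Wr = 0 := by rw [← hJfix Wr hSWr]; exact hJWr
    have hWi0 : Wi = 0 := by rw [← hJfix Wi hSWi]; exact hJWi
    apply hv
    funext k
    rcases k with i | (j | l)
    · exact congrFun hX0 i
    · exact Complex.ext (congrFun hUr0 j) (congrFun hUi0 j)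
    · exact Complex.ext (congrFun hWr0 l) (congrFun hWi0 l)
  · -- β ≠ 0 : eigenvector components vanish
    rw [hX0, Matrix.mulVec_zero, neg_zero] at e2 e3
    rw [hJW0, smul_zero, add_zero] at e3
    have hW0 : W = 0 := by
      funext l
      have := congrFun e3.symm l
      simpa [hb] using this
    have hU0 : U = 0 := by
      funext j
      have := congrFun e2.symm j
      simpa [hb] using this
    apply hv
    funext k
    rcases k with i | (j | l)
    · exact congrFun hX0 i
    · exact congrFun hU0 j
    · exact congrFun hW0 l
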